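/- Let G be a group acting on a set M̂, let B̂ ⊆ M̂, and for the action of ℤ on M̂ define N₊ = ⋃_{i ≥ 0} (B̂ + i) and N = ⋃_{i ∈ ℤ} (B̂ + i). Suppose p̂ ∈ M̂ is such that p̂ + i ∈ N₊ for all sufficiently large i and p̂ + i ∉ N₊ for all sufficiently negative i. Then for every k ≥ 1, the number of integers ℓ such that exactly one of p̂ + ℓ, p̂ + ℓ + k lies in N₊ is finite and congruent to k modulo 2. -/

import Mathlib

/-- **Intersection-parity for a ℤ-action (set-theoretic form).**  Let `ℤ` act on a set
`M̂`, let `B̂ ⊆ M̂`, and set `N₊ = ⋃_{i ≥ 0} (B̂ + i)`.  Suppose `p̂ ∈ M̂` is such that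
`p̂ + i ∈ N₊` for all sufficiently large `i` and `p̂ + i ∉ N₊` for all sufficiently
negative `i`.  Then for every `k ≥ 1`, the set of integers `ℓ` such that exactly one of
`p̂ + ℓ`, `p̂ + ℓ + k` lies in `N₊` is finite and its cardinality is congruent to `k`
modulo 2. -/
theorem zaction_parity {Mhat : Type*} [AddAction ℤ Mhat] (Bhat : Set Mhat) (phat : Mhat)
    (Nplus : Set Mhat) (hN : Nplus = ⋃ i ∈ {i : ℤ | 0 ≤ i}, (fun x => i +ᵥ x) '' Bhat)
    (hup : ∃ A : ℤ, ∀ i : ℤ, A ≤ i → (i +ᵥ phat) ∈ Nplus)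
    (hdown : ∃ B : ℤ, ∀ i : ℤ, i ≤ B → (i +ᵥ phat) ∉ Nplus)
    (k : ℤ) (hk : 1 ≤ k) :
    {ℓ : ℤ | Xor' ((ℓ +ᵥ phat) ∈ Nplus) (((ℓ + k) +ᵥ phat) ∈ Nplus)}.Finite ∧
      ({ℓ : ℤ | Xor' ((ℓ +ᵥ phat) ∈ Nplus) (((ℓ + k) +ᵥ phat) ∈ Nplus)}.ncard : ℤ)
        ≡ k [ZMOD 2] := by
  classical
  set f : ℤ → Prop := fun ℓ => (ℓ +ᵥ phat) ∈ Nplus with hf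
  -- monotonicity: f ℓ → f (ℓ + 1)
  have mono1 : ∀ ℓ : ℤ, f ℓ → f (ℓ + 1) := by
    intro ℓ hℓ
    simp only [hf, hN, Set.mem_iUnion, Set.mem_image, Set.mem_setOf_eq] at hℓ ⊢
    obtain ⟨i, hi, b, hb, heq⟩ := hℓ
    refine ⟨i + 1, by omega, b, hb, ?_⟩
    have : (i + 1) +ᵥ b = (1 : ℤ) +ᵥ (i +ᵥ b) := by rw [← add_vadd]; ring_nf
    rw [this, heq, ← add_vadd]
    ring_nf
  have mono : ∀ ℓ m : ℤ, ℓ ≤ m → f ℓ → f m := by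
    intro ℓ m hlm hℓ
    refine Int.le_induction (motive := fun m _ => f m) ?_ ?_ m hlm
    · exact hℓ
    · intro n _ ih; exact mono1 n ih
  obtain ⟨A, hA⟩ := hup
  obtain ⟨B, hB⟩ := hdown
  -- least element t with f t
  obtain ⟨t, hft, htle⟩ := Int.exists_least_of_bdd (P := f)
    (Hbdd := ⟨B + 1, fun z hz => by
      by_contra h
      exact hB z (by omega) hz⟩)
    (Hinh := ⟨A, hA A le_rfl⟩)
  have hfc : ∀ ℓ : ℤ, f ℓ ↔ t ≤ ℓ := by
    intro ℓ
    constructor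
    · exact htle ℓ
    · intro h; exact mono t ℓ h hft
  have hset : {ℓ : ℤ | Xor' ((ℓ +ᵥ phat) ∈ Nplus) (((ℓ + k) +ᵥ phat) ∈ Nplus)}
      = Set.Ico (t - k) t := by
    ext ℓ
    simp only [Set.mem_setOf_eq, Set.mem_Ico, Xor', Xor]
    rw [show ((ℓ +ᵥ phat) ∈ Nplus) = f ℓ from rfl,
      show (((ℓ + k) +ᵥ phat) ∈ Nplus) = f (ℓ + k) from rfl, hfc, hfc]
    omega
  rw [hset]
  constructor
  · exact Set.finite_Ico _ _
  · have : (Set.Ico (t - k) t).ncard = k.toNat := by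
      rw [← Nat.card_coe_set_eq, Nat.card_eq_card_toFinset]
      simp [Set.toFinset_Ico]
    rw [this]
    rw [Int.toNat_of_nonneg (by omega)]
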